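/- Let E be a real inner product space with inner product ⟪·,·⟫. Let b, k ∈ E, set B := ⟪b,b⟫ and f := ⟪b,k⟫, and assume B > 0. Let p, q, h be real numbers with p + q·B ≠ 0. Suppose that for every y ∈ E one has B·(4·p + 3·q·B)·⟪k,y⟫² − 4·(4·p + 3·q·B)·⟪b,y⟫·⟪k,y⟫·f + 4·p·⟪y,y⟫·f² = h·(p·B·⟪y,y⟫ − (4·p + 3·q·B)·⟪b,y⟫²). Then h = (8·p + 9·q·B)·f² / (3·B·(p + q·B)). -/
import Mathlib

open RealInnerProductSpace

/-- determination of the proportionality factor `h` (equation (4.11)). -/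
theorem conformal_factor_h_value {E : Type*} [NormedAddCommGroup E] [InnerProductSpace ℝ E]
    (b k : E) (B f : ℝ) (hBdef : B = ⟪b, b⟫) (hfdef : f = ⟪b, k⟫) (hB : 0 < B)
    (p q h : ℝ) (hpq : p + q * B ≠ 0)
    (hyp : ∀ y : E,
      B * (4 * p + 3 * q * B) * ⟪k, y⟫ ^ 2
        - 4 * (4 * p + 3 * q * B) * ⟪b, y⟫ * ⟪k, y⟫ * f
        + 4 * p * ⟪y, y⟫ * f ^ 2
      = h * (p * B * ⟪y, y⟫ - (4 * p + 3 * q * B) * ⟪b, y⟫ ^ 2)) :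
    h = (8 * p + 9 * q * B) * f ^ 2 / (3 * B * (p + q * B)) := by
  have H := hyp b
  have h1 : (⟪k, b⟫ : ℝ) = f := by rw [real_inner_comm]; exact hfdef.symm
  have h2 : (⟪b, b⟫ : ℝ) = B := hBdef.symm
  rw [h1, h2] at H
  have hB0 : B ≠ 0 := ne_of_gt hB
  field_simp
  nlinarith [H]
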